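/- Let ε ∈ ℝ, let n ∈ ℕ, and let β : ℝⁿ → ℝⁿ be a differentiable map such that g ↦ β(g) + ε·g is homogeneous of degree 3, i.e. β(t·g) + ε·(t·g) = t³·(β(g) + ε·g) for all t ∈ ℝ and g ∈ ℝⁿ. If g* ∈ ℝⁿ satisfies β(g*) = 0, then the Jacobian matrix Dβ(g*) satisfies Dβ(g*)·g* = 2ε·g*. In particular, if g* ≠ 0, then 2ε is an eigenvalue of Dβ(g*) with eigenvector g*. -/

import Mathlib

/-- If `β : ℝⁿ → ℝⁿ` is differentiable and `g ↦ β g + ε • g` is homogeneous of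
degree 3, then at any zero `g*` of `β` the Jacobian satisfies
`Dβ(g*) g* = 2ε • g*`; in particular if `g* ≠ 0` then `2ε` is an eigenvalue of
`Dβ(g*)` with eigenvector `g*`. -/
theorem stmt0 (ε : ℝ) (n : ℕ) (β : (Fin n → ℝ) → (Fin n → ℝ))
    (hdiff : Differentiable ℝ β)
    (hhom : ∀ (t : ℝ) (g : Fin n → ℝ),
      β (t • g) + ε • (t • g) = t ^ 3 • (β g + ε • g))
    (gstar : Fin n → ℝ) (hfix : β gstar = 0) :
    fderiv ℝ β gstar gstar = (2 * ε) • gstar ∧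
      (gstar ≠ 0 →
        Module.End.HasEigenvector
          (↑(fderiv ℝ β gstar) : (Fin n → ℝ) →ₗ[ℝ] (Fin n → ℝ))
          (2 * ε) gstar) := by
  have hfun : ∀ t : ℝ, β (t • gstar) = (ε * t ^ 3 - ε * t) • gstar := by
    intro t
    have h := hhom t gstar
    rw [hfix, zero_add] at h
    have : β (t • gstar) = t ^ 3 • ε • gstar - ε • t • gstar := by
      rw [← h]; abel
    rw [this, smul_smul, smul_smul, ← sub_smul]
    ring_nf
  have hd1 : HasDerivAt (fun t : ℝ => β (t • gstar))
      (fderiv ℝ β gstar gstar) 1 := by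
    have hg : HasDerivAt (fun t : ℝ => t • gstar) gstar 1 := by
      simpa using (hasDerivAt_id (1:ℝ)).smul_const gstar
    have hβ : HasFDerivAt β (fderiv ℝ β gstar) ((1:ℝ) • gstar) := by
      simpa using (hdiff gstar).hasFDerivAt
    exact hβ.comp_hasDerivAt 1 hg
  have hd2 : HasDerivAt (fun t : ℝ => (ε * t ^ 3 - ε * t) • gstar)
      ((2 * ε) • gstar) 1 := by
    have h3 : HasDerivAt (fun t : ℝ => ε * t ^ 3 - ε * t) (2 * ε) 1 := by
      have := ((hasDerivAt_pow 3 (1:ℝ)).const_mul ε).sub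
        ((hasDerivAt_id (1:ℝ)).const_mul ε)
      refine this.congr_deriv ?_
      norm_num; ring
    simpa using h3.smul_const gstar
  have hd1' : HasDerivAt (fun t : ℝ => β (t • gstar))
      ((2 * ε) • gstar) 1 := by
    have : (fun t : ℝ => β (t • gstar))
        = fun t : ℝ => (ε * t ^ 3 - ε * t) • gstar := funext hfun
    rw [this]; exact hd2
  have hmain : fderiv ℝ β gstar gstar = (2 * ε) • gstar := hd1.unique hd1'
  refine ⟨hmain, fun hne => ?_⟩
  refine ⟨?_, hne⟩
  rw [Module.End.mem_eigenspace_iff]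
  simpa using hmain
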